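/- arXiv:0803.4494 — 2 statements merged into one kernel-verified Lean document; each statement's English description precedes it below -/
import Mathlib

section
/- Let n ≥ 1, let g ∈ Matrix (Fin n) (Fin n) ℝ be a positive definite symmetric matrix, let u ∈ ℝⁿ and c ∈ ℝ, and let G̃ be the Walker-type matrix built from (g, u, c). Then there exists an invertible matrix P ∈ Matrix (Fin (n+2)) (Fin (n+2)) ℝ such that Pᵀ·G̃·P is the diagonal matrix diag(−1, 1, 1, …, 1); i.e., the symmetric bilinear form defined by G̃ has Lorentzian signature (1, n+1). -/
open Matrix

/-- The Walker-type symmetric `(n+2) × (n+2)` matrix with block form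
`[[0, 0ᵀ, 1], [0, g, u], [1, uᵀ, c]]`, the coordinate matrix of the Lorentzian metric
`2dxdz + uᵢdyⁱdz + c·dz² + gᵢⱼdyⁱdyʲ`. -/
def walker (n : ℕ) (g : Matrix (Fin n) (Fin n) ℝ) (u : Fin n → ℝ) (c : ℝ) :
    Matrix (Fin (n + 2)) (Fin (n + 2)) ℝ :=
  fun i j =>
    if hi : 1 ≤ i.val ∧ i.val ≤ n then
      if hj : 1 ≤ j.val ∧ j.val ≤ n then g ⟨i.val - 1, by omega⟩ ⟨j.val - 1, by omega⟩
      else if j.val = n + 1 then u ⟨i.val - 1, by omega⟩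
      else 0
    else if i.val = 0 then
      if j.val = n + 1 then 1 else 0
    else
      if j.val = 0 then 1
      else if hj : 1 ≤ j.val ∧ j.val ≤ n then u ⟨j.val - 1, by omega⟩
      else c

section Aux

variable {n : ℕ}

/-- The index equivalence splitting `Fin (n+2)` as `x`-coordinate, `y`-block, `z`-coordinate. -/
def walkerEquiv (n : ℕ) : ((Fin 1 ⊕ Fin n) ⊕ Fin 1) ≃ Fin (n + 2) :=
  ((finSumFinEquiv.sumCongr (Equiv.refl (Fin 1))).trans finSumFinEquiv).trans
    (finCongr (by omega))

@[simp] lemma walkerEquiv_x (x : Fin 1) :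
    ((walkerEquiv n (Sum.inl (Sum.inl x)) : Fin (n + 2)) : ℕ) = 0 := by
  simp [walkerEquiv, Fin.val_eq_zero]

@[simp] lemma walkerEquiv_y (i : Fin n) :
    ((walkerEquiv n (Sum.inl (Sum.inr i)) : Fin (n + 2)) : ℕ) = 1 + i.val := by
  simp [walkerEquiv]

@[simp] lemma walkerEquiv_z (x : Fin 1) :
    ((walkerEquiv n (Sum.inr x) : Fin (n + 2)) : ℕ) = n + 1 := by
  simp [walkerEquiv]

/-- The Walker matrix in block coordinates. -/
def walkerBlk (n : ℕ) (g : Matrix (Fin n) (Fin n) ℝ) (u : Fin n → ℝ) (c : ℝ) :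
    Matrix ((Fin 1 ⊕ Fin n) ⊕ Fin 1) ((Fin 1 ⊕ Fin n) ⊕ Fin 1) ℝ :=
  Matrix.of fun i j =>
    match i, j with
    | .inl (.inl _), .inl (.inl _) => 0
    | .inl (.inl _), .inl (.inr _) => 0
    | .inl (.inl _), .inr _ => 1
    | .inl (.inr _), .inl (.inl _) => 0
    | .inl (.inr i), .inl (.inr j) => g i j
    | .inl (.inr i), .inr _ => u i
    | .inr _, .inl (.inl _) => 1
    | .inr _, .inl (.inr j) => u j
    | .inr _, .inr _ => c

lemma walker_eq_blk (n : ℕ) (g : Matrix (Fin n) (Fin n) ℝ) (u : Fin n → ℝ) (c : ℝ) :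
    walker n g u c = (walkerBlk n g u c).submatrix (walkerEquiv n).symm (walkerEquiv n).symm := by
  have key : ∀ i j, walker n g u c (walkerEquiv n i) (walkerEquiv n j) = walkerBlk n g u c i j := by
    rintro ((x | i) | x') ((y | j) | y') <;>
      (try have hi2 := i.isLt) <;> (try have hj2 := j.isLt) <;>
      simp only [walker, walkerBlk, Matrix.of_apply, walkerEquiv_x, walkerEquiv_y,
        walkerEquiv_z] <;>
      (split_ifs <;>
        first
          | rfl
          | (exfalso; first | assumption | omega)
          | (congr 1 <;> (apply Fin.ext; simp; try omega)))
  ext k l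
  rw [Matrix.submatrix_apply]
  conv_lhs => rw [show k = walkerEquiv n ((walkerEquiv n).symm k) by simp,
    show l = walkerEquiv n ((walkerEquiv n).symm l) by simp]
  exact key _ _

/-- The congruence matrix in block coordinates. -/
noncomputable def walkerP (n : ℕ) (S : Matrix (Fin n) (Fin n) ℝ) (w : Fin n → ℝ) (a s : ℝ) :
    Matrix ((Fin 1 ⊕ Fin n) ⊕ Fin 1) ((Fin 1 ⊕ Fin n) ⊕ Fin 1) ℝ :=
  Matrix.of fun i j =>
    match i, j with
    | .inl (.inl _), .inl (.inl _) => (1 + a) / s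
    | .inl (.inl _), .inl (.inr _) => 0
    | .inl (.inl _), .inr _ => (1 - a) / s
    | .inl (.inr i), .inl (.inl _) => w i / s
    | .inl (.inr i), .inl (.inr k) => S i k
    | .inl (.inr i), .inr _ => -(w i) / s
    | .inr _, .inl (.inl _) => -(1 / s)
    | .inr _, .inl (.inr _) => 0
    | .inr _, .inr _ => 1 / s

/-- The intermediate matrix `Pᵀ * W` in block coordinates. -/
noncomputable def walkerE (n : ℕ) (g S : Matrix (Fin n) (Fin n) ℝ) (u : Fin n → ℝ) (a s : ℝ) :
    Matrix ((Fin 1 ⊕ Fin n) ⊕ Fin 1) ((Fin 1 ⊕ Fin n) ⊕ Fin 1) ℝ :=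
  Matrix.of fun i j =>
    match i, j with
    | .inl (.inl _), .inl (.inl _) => -(1 / s)
    | .inl (.inl _), .inl (.inr _) => 0
    | .inl (.inl _), .inr _ => (1 - a) / s
    | .inl (.inr _), .inl (.inl _) => 0
    | .inl (.inr k), .inl (.inr m) => (S * g) k m
    | .inl (.inr k), .inr _ => (S *ᵥ u) k
    | .inr _, .inl (.inl _) => 1 / s
    | .inr _, .inl (.inr _) => 0
    | .inr _, .inr _ => (1 + a) / s

end Aux

open scoped MatrixOrder

/-- The symmetric bilinear form defined by the Walker-type matrix has Lorentzian signature
`(1, n+1)`: it is congruent to `diag(−1, 1, …, 1)`. -/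
theorem walker_lorentzian_signature (n : ℕ) (hn : 1 ≤ n)
    (g : Matrix (Fin n) (Fin n) ℝ) (hg : g.PosDef) (hgs : g.IsSymm)
    (u : Fin n → ℝ) (c : ℝ) :
    ∃ P : Matrix (Fin (n + 2)) (Fin (n + 2)) ℝ, IsUnit P ∧
      Pᵀ * walker n g u c * P =
        Matrix.diagonal (fun i => if i.val = 0 then (-1 : ℝ) else 1) := by
  classical
  -- basic facts about `g` and its square root
  have hdetg : g.det ≠ 0 := hg.det_pos.ne'
  have hgu : IsUnit g.det := isUnit_iff_ne_zero.mpr hdetg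
  set R := CFC.sqrt g with hRdef
  have hRR : R * R = g := by
    exact CFC.sqrt_mul_sqrt_self g hg.posSemidef.nonneg
  have hRsym : Rᵀ = R := by
    have h : R.IsHermitian := by
      exact (CFC.sqrt_nonneg g).posSemidef.1
    rwa [Matrix.IsHermitian, Matrix.conjTranspose_eq_transpose_of_trivial] at h
  have hdetR : IsUnit R.det := by
    refine isUnit_iff_ne_zero.mpr fun h => hdetg ?_
    have h2 : R.det * R.det = g.det := by rw [← Matrix.det_mul, hRR]
    rw [← h2, h, zero_mul]
  set S := R⁻¹ with hSdef
  have hSR : S * R = 1 := Matrix.nonsing_inv_mul R hdetR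
  have hRS : R * S = 1 := Matrix.mul_nonsing_inv R hdetR
  have hSsym : Sᵀ = S := by rw [hSdef, Matrix.transpose_nonsing_inv, hRsym]
  have hSgS : S * g * S = 1 := by
    have h : S * g * S = S * R * (R * S) := by
      rw [← hRR]; simp only [Matrix.mul_assoc]
    rw [h, Matrix.mul_assoc, hRS, Matrix.mul_one, hSR]
  -- the vector `w` and scalars
  set w := g⁻¹ *ᵥ u with hwdef
  have hgw : g *ᵥ w = u := by
    rw [hwdef, Matrix.mulVec_mulVec, Matrix.mul_nonsing_inv g hgu, Matrix.one_mulVec]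
  have hwg : w ᵥ* g = u := by
    conv_lhs => rw [← hgs]
    rw [Matrix.vecMul_transpose, hgw]
  set T := ∑ i, u i * w i with hTdef
  set s := Real.sqrt 2 with hsdef
  have hs2 : s * s = 2 := Real.mul_self_sqrt (by norm_num)
  have hs0 : s ≠ 0 := by
    intro h; rw [h, mul_zero] at hs2; norm_num at hs2
  set a := (c - T) / 2 with hadef
  -- entrywise identities
  have A1 : ∀ k, ∑ j, g k j * w j = u k := fun k => by
    have h := congrFun hgw k
    simpa [Matrix.mulVec, dotProduct] using h
  have A2 : ∀ m, ∑ l, w l * g l m = u m := fun m => by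
    have h := congrFun hwg m
    simpa [Matrix.vecMul, dotProduct] using h
  have hS' : ∀ k l, S l k = S k l := fun k l => by
    rw [← Matrix.transpose_apply S k l, hSsym]
  have A4 : ∀ k l, ∑ m, (∑ j, S k j * g j m) * S m l = if k = l then 1 else 0 := fun k l => by
    have h := congrFun (congrFun hSgS k) l
    simpa [Matrix.mul_apply, Matrix.one_apply] using h
  have hSgw : ∀ k, ∑ m, (∑ j, S k j * g j m) * w m = (S *ᵥ u) k := fun k => by
    have h : (S * g) *ᵥ w = S *ᵥ u := by rw [← Matrix.mulVec_mulVec, hgw]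
    have h2 := congrFun h k
    simpa [Matrix.mulVec, Matrix.mul_apply, dotProduct] using h2
  have hTw : ∑ l, w l * u l = T := by
    rw [hTdef]; exact Finset.sum_congr rfl fun l _ => mul_comm _ _
  have hdiv : ∀ v f : Fin n → ℝ, ∑ x, v x / s * f x = (∑ x, v x * f x) / s := fun v f => by
    rw [Finset.sum_div]; exact Finset.sum_congr rfl fun x _ => div_mul_eq_mul_div _ _ _
  have hdiv2 : ∀ v f : Fin n → ℝ, ∑ x, v x * (f x / s) = (∑ x, v x * f x) / s := fun v f => by
    rw [Finset.sum_div]; exact Finset.sum_congr rfl fun x _ => (mul_div_assoc _ _ _).symm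
  -- the two key matrix computations
  have hQW : (walkerP n S w a s)ᵀ * walkerBlk n g u c = walkerE n g S u a s := by
    ext i j
    rcases i with ((x | i) | x) <;> rcases j with ((y | j) | y) <;>
      simp only [Matrix.mul_apply, Matrix.transpose_apply, walkerP, walkerE, walkerBlk,
        Matrix.of_apply, Fintype.sum_sum_type, Fin.sum_univ_one, mul_zero, zero_mul, mul_one,
        one_mul, Finset.sum_const_zero, add_zero, zero_add]
    · rw [hdiv w (fun x => g x j), A2 j]; field_simp; ring
    · rw [hdiv w u, hTw, hadef]; field_simp; ring
    · exact Finset.sum_congr rfl fun x _ => by rw [hS' i x]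
    · rw [show (S *ᵥ u) i = ∑ x, S i x * u x from rfl]
      exact Finset.sum_congr rfl fun x _ => by rw [hS' i x]
    · simp only [neg_div, neg_mul, Finset.sum_neg_distrib]
      rw [hdiv w (fun x => g x j), A2 j]; field_simp; ring
    · simp only [neg_div, neg_mul, Finset.sum_neg_distrib]
      rw [hdiv w u, hTw, hadef]; field_simp; ring
  have hEQ : walkerE n g S u a s * walkerP n S w a s =
      Matrix.diagonal (Sum.elim (Sum.elim (fun _ => (-1 : ℝ)) fun _ => 1) fun _ => 1) := by
    ext i j
    rcases i with ((x | i) | x) <;> rcases j with ((y | j) | y) <;>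
      simp only [Matrix.mul_apply, walkerP, walkerE, Matrix.of_apply, Fintype.sum_sum_type,
        Fin.sum_univ_one, mul_zero, zero_mul, mul_one, one_mul, Finset.sum_const_zero, add_zero,
        zero_add, Matrix.diagonal_apply, Sum.elim_inl, Sum.elim_inr, Sum.inl.injEq,
        Sum.inr.injEq, Fin.eq_zero, if_true, reduceCtorEq, if_false, ite_true, ite_false]
    · rw [neg_mul, mul_neg, div_mul_div_comm, div_mul_div_comm, hs2]; ring
    · ring
    · rw [hdiv2 (fun x => ∑ j, S i j * g j x) w, hSgw i]; field_simp; ring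
    · exact A4 i j
    · simp only [neg_div, mul_neg, neg_mul, Finset.sum_neg_distrib]
      rw [hdiv2 (fun x => ∑ j, S i j * g j x) w, hSgw i]; field_simp; ring
    · ring
    · rw [div_mul_div_comm, div_mul_div_comm, hs2]; ring
  -- assemble
  set e := walkerEquiv n with hedef
  have heq : ((walkerP n S w a s).submatrix e.symm e.symm)ᵀ * walker n g u c *
      (walkerP n S w a s).submatrix e.symm e.symm =
      Matrix.diagonal (fun i : Fin (n + 2) => if i.val = 0 then (-1 : ℝ) else 1) := by
    rw [walker_eq_blk n g u c, Matrix.transpose_submatrix, ← hedef,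
      Matrix.submatrix_mul_equiv, Matrix.submatrix_mul_equiv, hQW, hEQ,
      Matrix.submatrix_diagonal_equiv]
    have h : ∀ x0 : (Fin 1 ⊕ Fin n) ⊕ Fin 1,
        (Sum.elim (Sum.elim (fun _ => (-1 : ℝ)) fun _ => 1) fun _ => 1) x0 =
        if ((e x0 : Fin (n + 2)) : ℕ) = 0 then (-1 : ℝ) else 1 := by
      rintro ((z | i0) | z) <;> simp [hedef]
    refine congrArg Matrix.diagonal (funext fun i => ?_)
    rw [Function.comp_apply, h (e.symm i)]
    simp [hedef]
  refine ⟨(walkerP n S w a s).submatrix e.symm e.symm, ?_, heq⟩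
  rw [Matrix.isUnit_iff_isUnit_det]
  refine isUnit_iff_ne_zero.mpr fun h0 => ?_
  have hd : (Matrix.diagonal (fun i : Fin (n + 2) =>
      if i.val = 0 then (-1 : ℝ) else 1)).det ≠ 0 := by
    rw [Matrix.det_diagonal]
    apply Finset.prod_ne_zero_iff.mpr
    intro i _
    split <;> norm_num
  apply hd
  rw [← heq, Matrix.det_mul, Matrix.det_mul, h0, mul_zero]
end

section
/- Let n ≥ 1, let g ∈ Matrix (Fin n) (Fin n) ℝ be a positive definite symmetric matrix, let u ∈ ℝⁿ and c ∈ ℝ, and let G̃ be the Walker-type matrix built from (g, u, c). Then G̃ is invertible and its inverse is the matrix with block form [[uᵀg⁻¹u − c, −(g⁻¹u)ᵀ, 1], [−g⁻¹u, g⁻¹, 0], [1, 0ᵀ, 0]], i.e., (G̃⁻¹)_{00} = uᵀg⁻¹u − c, (G̃⁻¹)_{0j} = (G̃⁻¹)_{j0} = −(g⁻¹u)_j for 1 ≤ j ≤ n, (G̃⁻¹)_{0,n+1} = (G̃⁻¹)_{n+1,0} = 1, (G̃⁻¹)_{ij} = (g⁻¹)_{ij} for 1 ≤ i,j ≤ n,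 and all other entries 0. -/
open Matrix

/-- The inverse of the Walker-type matrix: the block matrix
`[[uᵀg⁻¹u − c, −(g⁻¹u)ᵀ, 1], [−g⁻¹u, g⁻¹, 0], [1, 0ᵀ, 0]]`. -/
noncomputable def walkerInv (n : ℕ) (g : Matrix (Fin n) (Fin n) ℝ) (u : Fin n → ℝ) (c : ℝ) :
    Matrix (Fin (n + 2)) (Fin (n + 2)) ℝ :=
  fun i j =>
    if hi : 1 ≤ i.val ∧ i.val ≤ n then
      if hj : 1 ≤ j.val ∧ j.val ≤ n then g⁻¹ ⟨i.val - 1, by omega⟩ ⟨j.val - 1, by omega⟩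
      else if j.val = 0 then -(g⁻¹.mulVec u ⟨i.val - 1, by omega⟩)
      else 0
    else if i.val = 0 then
      if j.val = 0 then u ⬝ᵥ g⁻¹.mulVec u - c
      else if hj : 1 ≤ j.val ∧ j.val ≤ n then -(g⁻¹.mulVec u ⟨j.val - 1, by omega⟩)
      else 1
    else
      if j.val = 0 then 1 else 0

namespace WalkerAux

open Matrix

def emb (n : ℕ) (i : Fin n) : Fin (n + 2) := ⟨i.val + 1, by omega⟩

def lastIdx (n : ℕ) : Fin (n + 2) := ⟨n + 1, by omega⟩

lemma sum_split {n : ℕ} (f : Fin (n + 2) → ℝ) :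
    ∑ k, f k = f 0 + (∑ k : Fin n, f (emb n k)) + f (lastIdx n) := by
  have h1 : ∀ i : Fin n, (i.castSucc.succ : Fin (n + 2)) = emb n i :=
    fun i => Fin.ext (by simp [emb])
  have h2 : ((Fin.last n).succ : Fin (n + 2)) = lastIdx n := Fin.ext (by simp [lastIdx])
  rw [Fin.sum_univ_succ, Fin.sum_univ_castSucc]
  simp only [h1, h2]
  ring

variable {n : ℕ} (g : Matrix (Fin n) (Fin n) ℝ) (u : Fin n → ℝ) (c : ℝ)

lemma w00 : walker n g u c 0 0 = 0 := by
  simp only [walker, Fin.val_zero]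
  split_ifs <;> first | rfl | contradiction | (exfalso; omega) | simp
lemma w0e (b : Fin n) : walker n g u c 0 (emb n b) = 0 := by
  have := b.isLt
  simp only [walker, emb, Fin.val_zero]
  split_ifs <;> first | rfl | contradiction | (exfalso; omega) | (simp <;> omega)
lemma w0L : walker n g u c 0 (lastIdx n) = 1 := by
  simp only [walker, lastIdx, Fin.val_zero]
  split_ifs <;> first | rfl | contradiction | (exfalso; omega) | simp
lemma we0 (a : Fin n) : walker n g u c (emb n a) 0 = 0 := by
  have := a.isLt
  simp only [walker, emb, Fin.val_zero]
  split_ifs <;> first | rfl | contradiction | (exfalso; omega) | simp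
lemma wee (a b : Fin n) : walker n g u c (emb n a) (emb n b) = g a b := by
  have := a.isLt; have := b.isLt
  simp only [walker, emb]
  split_ifs <;> first | rfl | contradiction | (exfalso; omega) | simp
lemma weL (a : Fin n) : walker n g u c (emb n a) (lastIdx n) = u a := by
  have := a.isLt
  simp only [walker, emb, lastIdx]
  split_ifs <;> first | rfl | contradiction | (exfalso; omega) | simp
lemma wL0 : walker n g u c (lastIdx n) 0 = 1 := by
  simp only [walker, lastIdx, Fin.val_zero]
  split_ifs <;> first | rfl | contradiction | (exfalso; omega) | simp
lemma wLe (b : Fin n) : walker n g u c (lastIdx n) (emb n b) = u b := by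
  have := b.isLt
  simp only [walker, emb, lastIdx]
  split_ifs <;> first | rfl | contradiction | (exfalso; omega) | simp
lemma wLL : walker n g u c (lastIdx n) (lastIdx n) = c := by
  simp only [walker, lastIdx]
  split_ifs <;> first | rfl | contradiction | (exfalso; omega) | simp

lemma v00 : walkerInv n g u c 0 0 = u ⬝ᵥ g⁻¹.mulVec u - c := by
  simp only [walkerInv, Fin.val_zero]
  split_ifs <;> first | rfl | contradiction | (exfalso; omega) | simp
lemma v0e (b : Fin n) : walkerInv n g u c 0 (emb n b) = -(g⁻¹.mulVec u b) := by
  have := b.isLt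
  simp only [walkerInv, emb, Fin.val_zero]
  split_ifs <;> first | rfl | contradiction | (exfalso; omega) | simp
lemma v0L : walkerInv n g u c 0 (lastIdx n) = 1 := by
  simp only [walkerInv, lastIdx, Fin.val_zero]
  split_ifs <;> first | rfl | contradiction | (exfalso; omega) | simp
lemma ve0 (a : Fin n) : walkerInv n g u c (emb n a) 0 = -(g⁻¹.mulVec u a) := by
  have := a.isLt
  simp only [walkerInv, emb, Fin.val_zero]
  split_ifs <;> first | rfl | contradiction | (exfalso; omega) | simp
lemma vee (a b : Fin n) : walkerInv n g u c (emb n a) (emb n b) = g⁻¹ a b := by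
  have := a.isLt; have := b.isLt
  simp only [walkerInv, emb]
  split_ifs <;> first | rfl | contradiction | (exfalso; omega) | simp
lemma veL (a : Fin n) : walkerInv n g u c (emb n a) (lastIdx n) = 0 := by
  have := a.isLt
  simp only [walkerInv, emb, lastIdx]
  split_ifs <;> first | rfl | contradiction | (exfalso; omega) | simp
lemma vL0 : walkerInv n g u c (lastIdx n) 0 = 1 := by
  simp only [walkerInv, lastIdx, Fin.val_zero]
  split_ifs <;> first | rfl | contradiction | (exfalso; omega) | simp
lemma vLe (b : Fin n) : walkerInv n g u c (lastIdx n) (emb n b) = 0 := by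
  have := b.isLt
  simp only [walkerInv, emb, lastIdx]
  split_ifs <;> first | rfl | contradiction | (exfalso; omega) | simp
lemma vLL : walkerInv n g u c (lastIdx n) (lastIdx n) = 0 := by
  simp only [walkerInv, lastIdx]
  split_ifs <;> first | rfl | contradiction | (exfalso; omega) | simp

lemma emb_ne_zero {n : ℕ} (a : Fin n) : (emb n a : Fin (n + 2)) ≠ 0 := by
  simp [emb, Fin.ext_iff]

lemma zero_ne_emb {n : ℕ} (a : Fin n) : (0 : Fin (n + 2)) ≠ emb n a := (emb_ne_zero a).symm

lemma lastIdx_ne_zero {n : ℕ} : (lastIdx n : Fin (n + 2)) ≠ 0 := by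
  simp [lastIdx, Fin.ext_iff]

lemma zero_ne_lastIdx {n : ℕ} : (0 : Fin (n + 2)) ≠ lastIdx n := lastIdx_ne_zero.symm

lemma emb_ne_lastIdx {n : ℕ} (a : Fin n) : (emb n a : Fin (n + 2)) ≠ lastIdx n := by
  have := a.isLt
  simp only [emb, lastIdx, Fin.ext_iff, ne_eq]
  omega

lemma lastIdx_ne_emb {n : ℕ} (a : Fin n) : (lastIdx n : Fin (n + 2)) ≠ emb n a :=
  (emb_ne_lastIdx a).symm

lemma emb_inj {n : ℕ} {a b : Fin n} : emb n a = emb n b ↔ a = b := by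
  simp only [emb, Fin.ext_iff]
  omega

end WalkerAux

/-- The Walker-type matrix built from a positive definite symmetric matrix `g`, a vector
`u` and a scalar `c` is invertible, with inverse the block matrix
`[[uᵀg⁻¹u − c, −(g⁻¹u)ᵀ, 1], [−g⁻¹u, g⁻¹, 0], [1, 0ᵀ, 0]]`. -/
theorem walker_inv (n : ℕ) (hn : 1 ≤ n)
    (g : Matrix (Fin n) (Fin n) ℝ) (hg : g.PosDef) (hgs : g.IsSymm)
    (u : Fin n → ℝ) (c : ℝ) :
    IsUnit (walker n g u c) ∧ (walker n g u c)⁻¹ = walkerInv n g u c := by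

  classical
  open WalkerAux in
  have hdet : IsUnit g.det := isUnit_iff_ne_zero.mpr hg.det_pos.ne'
  have hgg : g * g⁻¹ = 1 := Matrix.mul_nonsing_inv g hdet
  have hsymm : g⁻¹ᵀ = g⁻¹ := by
    rw [Matrix.transpose_nonsing_inv, hgs]
  have hkey : ∀ a : Fin n, (∑ k, g a k * g⁻¹.mulVec u k) = u a := by
    intro a
    have h : g.mulVec (g⁻¹.mulVec u) = u := by
      rw [Matrix.mulVec_mulVec, hgg, Matrix.one_mulVec]
    calc (∑ k, g a k * g⁻¹.mulVec u k) = g.mulVec (g⁻¹.mulVec u) a := rfl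
      _ = u a := by rw [h]
  have hvec : ∀ b : Fin n, (∑ k, u k * g⁻¹ k b) = g⁻¹.mulVec u b := by
    intro b
    simp only [Matrix.mulVec, dotProduct]
    refine Finset.sum_congr rfl fun k _ => ?_
    have h := congrFun (congrFun hsymm b) k
    simp only [Matrix.transpose_apply] at h
    rw [← h, mul_comm]
  have hmul : walker n g u c * walkerInv n g u c = 1 := by
    ext i j
    rw [Matrix.mul_apply, WalkerAux.sum_split]
    rcases Nat.lt_or_ge i.val 1 with hi | hi
    · have hi0 : i = 0 := Fin.ext (by simp only [Fin.val_zero]; omega)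
      subst hi0
      rcases Nat.lt_or_ge j.val 1 with hj | hj
      · have hj0 : j = 0 := Fin.ext (by simp only [Fin.val_zero]; omega)
        subst hj0
        simp [w00, w0e, w0L, vL0, Matrix.one_apply]
      · rcases Nat.lt_or_ge j.val (n + 1) with hj2 | hj2
        · have hje : j = emb n ⟨j.val - 1, by omega⟩ := by
            apply Fin.ext; show (j : ℕ) = j.val - 1 + 1; omega
          rw [hje]
          simp [w00, w0e, w0L, vLe, Matrix.one_apply_ne (zero_ne_emb _)]
        · have hjL : j = lastIdx n := by
            apply Fin.ext; show (j : ℕ) = n + 1; omega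
          rw [hjL]
          simp [w00, w0e, w0L, vLL, Matrix.one_apply_ne zero_ne_lastIdx]
    · rcases Nat.lt_or_ge i.val (n + 1) with hi2 | hi2
      · have hie : i = emb n ⟨i.val - 1, by omega⟩ := by
          apply Fin.ext; show (i : ℕ) = i.val - 1 + 1; omega
        rw [hie]
        set a : Fin n := ⟨i.val - 1, by omega⟩ with ha
        rcases Nat.lt_or_ge j.val 1 with hj | hj
        · have hj0 : j = 0 := Fin.ext (by simp only [Fin.val_zero]; omega)
          subst hj0
          rw [Matrix.one_apply_ne (emb_ne_zero a)]
          simp only [we0, wee, weL, ve0, vL0, mul_neg, mul_one, zero_mul, zero_add]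
          rw [Finset.sum_neg_distrib, hkey]
          ring
        · rcases Nat.lt_or_ge j.val (n + 1) with hj2 | hj2
          · have hje : j = emb n ⟨j.val - 1, by omega⟩ := by
              apply Fin.ext; show (j : ℕ) = j.val - 1 + 1; omega
            rw [hje]
            set b : Fin n := ⟨j.val - 1, by omega⟩ with hb
            simp only [we0, wee, weL, v0e, vee, vLe, zero_mul, mul_zero, zero_add, add_zero]
            rw [← Matrix.mul_apply, hgg, Matrix.one_apply, Matrix.one_apply]
            simp [emb_inj]
          · have hjL : j = lastIdx n := by
              apply Fin.ext; show (j : ℕ) = n + 1; omega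
            rw [hjL]
            rw [Matrix.one_apply_ne (emb_ne_lastIdx a)]
            simp [we0, wee, weL, v0L, veL, vLL]
      · have hiL : i = lastIdx n := by
          apply Fin.ext; show (i : ℕ) = n + 1; omega
        rw [hiL]
        rcases Nat.lt_or_ge j.val 1 with hj | hj
        · have hj0 : j = 0 := Fin.ext (by simp only [Fin.val_zero]; omega)
          subst hj0
          rw [Matrix.one_apply_ne lastIdx_ne_zero]
          simp only [wL0, wLe, wLL, v00, ve0, vL0, one_mul, mul_one, mul_neg]
          have h1 : (∑ k, -(u k * g⁻¹.mulVec u k)) = -(u ⬝ᵥ g⁻¹.mulVec u) := by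
            rw [Finset.sum_neg_distrib]; rfl
          rw [h1]
          ring
        · rcases Nat.lt_or_ge j.val (n + 1) with hj2 | hj2
          · have hje : j = emb n ⟨j.val - 1, by omega⟩ := by
              apply Fin.ext; show (j : ℕ) = j.val - 1 + 1; omega
            rw [hje]
            set b : Fin n := ⟨j.val - 1, by omega⟩ with hb
            rw [Matrix.one_apply_ne (lastIdx_ne_emb b)]
            simp only [wL0, wLe, wLL, v0e, vee, vLe, one_mul, mul_zero, add_zero]
            rw [hvec]
            ring
          · have hjL : j = lastIdx n := by
              apply Fin.ext; show (j : ℕ) = n + 1; omega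
            rw [hjL]
            simp [wL0, wLe, wLL, v0L, veL, vLL, Matrix.one_apply]
  have hmul' : walkerInv n g u c * walker n g u c = 1 := mul_eq_one_comm.mp hmul
  exact ⟨⟨⟨walker n g u c, walkerInv n g u c, hmul, hmul'⟩, rfl⟩,
    Matrix.inv_eq_right_inv hmul⟩
end
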